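/- If T is a bounded linear operator on a complex Hilbert space with Cartesian decomposition T = A + iB, then (1/4)‖ |T|² + |T*|² ‖ ≤ (√2/2) ω(A² + iB²) ≤ ω(T)². -/

import Mathlib

open scoped InnerProductSpace
open ContinuousLinearMap

variable {H : Type*} [NormedAddCommGroup H] [InnerProductSpace ℂ H] [CompleteSpace H]

set_option linter.unusedSectionVars false

/-- The numerical radius of a bounded operator. -/
noncomputable def numRadius (T : H →L[ℂ] H) : ℝ :=
  ⨆ x : {x : H // ‖x‖ = 1}, ‖⟪T x.1, x.1⟫_ℂ‖

/-- The absolute value |A| = (A*A)^(1/2). -/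
noncomputable def opAbs (A : H →L[ℂ] H) : H →L[ℂ] H := CFC.sqrt (adjoint A * A)

/-- Real part of the Cartesian decomposition. -/
noncomputable def reP (T : H →L[ℂ] H) : H →L[ℂ] H := (2:ℂ)⁻¹ • (T + adjoint T)

/-- Imaginary part of the Cartesian decomposition. -/
noncomputable def imP (T : H →L[ℂ] H) : H →L[ℂ] H := (2*Complex.I:ℂ)⁻¹ • (T - adjoint T)


lemma nr_bdd (T : H →L[ℂ] H) :
    BddAbove (Set.range fun x : {x : H // ‖x‖ = 1} => ‖⟪T x.1, x.1⟫_ℂ‖) := by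
  refine ⟨‖T‖, ?_⟩
  rintro _ ⟨x, rfl⟩
  calc ‖⟪T x.1, x.1⟫_ℂ‖ ≤ ‖T x.1‖ * ‖x.1‖ := by exact norm_inner_le_norm _ _
    _ ≤ (‖T‖ * ‖x.1‖) * ‖x.1‖ := by gcongr; exact T.le_opNorm _
    _ = ‖T‖ := by rw [x.2]; ring

lemma nr_nonneg (T : H →L[ℂ] H) : 0 ≤ numRadius T :=
  Real.iSup_nonneg fun _ => norm_nonneg _

lemma le_nr (T : H →L[ℂ] H) {x : H} (hx : ‖x‖ = 1) :
    ‖⟪T x, x⟫_ℂ‖ ≤ numRadius T :=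
  le_ciSup (nr_bdd T) ⟨x, hx⟩

lemma nr_le (T : H →L[ℂ] H) {c : ℝ} (hc : 0 ≤ c)
    (h : ∀ x : H, ‖x‖ = 1 → ‖⟪T x, x⟫_ℂ‖ ≤ c) : numRadius T ≤ c :=
  Real.iSup_le (fun x => h x.1 x.2) hc

lemma reP_sa (T : H →L[ℂ] H) : IsSelfAdjoint (reP T) := by
  rw [IsSelfAdjoint, reP, ← star_eq_adjoint, star_smul, star_add, star_star]
  simp [add_comm]

lemma imP_sa (T : H →L[ℂ] H) : IsSelfAdjoint (imP T) := by
  rw [IsSelfAdjoint, imP, ← star_eq_adjoint, star_smul, star_sub, star_star]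
  have h : star (2*Complex.I:ℂ)⁻¹ = -(2*Complex.I:ℂ)⁻¹ := by
    simp [Complex.ext_iff]
  rw [h, neg_smul, ← smul_neg, neg_sub]


lemma sa_norm_le {A : H →L[ℂ] H} (hA : IsSelfAdjoint A) {M : ℝ} (hM : 0 ≤ M)
    (h : ∀ x : H, ‖x‖ = 1 → |(⟪A x, x⟫_ℂ).re| ≤ M) : ‖A‖ ≤ M := by
  have hz : ∀ z : H, |(⟪A z, z⟫_ℂ).re| ≤ M * ‖z‖ ^ 2 := by
    intro z
    rcases eq_or_ne z 0 with rfl | hz0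
    · simp
    · have hn : ‖z‖ ≠ 0 := norm_ne_zero_iff.mpr hz0
      have hu : ‖(‖z‖⁻¹ : ℝ) • z‖ = 1 := by
        rw [norm_smul, norm_inv, norm_norm, inv_mul_cancel₀ hn]
      have h2 := h _ hu
      have hinner : ⟪A ((‖z‖⁻¹ : ℝ) • z), (‖z‖⁻¹ : ℝ) • z⟫_ℂ
          = ((‖z‖⁻¹ : ℝ) : ℂ) * ((‖z‖⁻¹ : ℝ) : ℂ) * ⟪A z, z⟫_ℂ := by
        simp only [← Complex.coe_smul, map_smul, inner_smul_left, inner_smul_right,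
          Complex.conj_ofReal]
        ring
      rw [hinner] at h2
      have : |(⟪A z, z⟫_ℂ).re| * (‖z‖⁻¹ * ‖z‖⁻¹) ≤ M := by
        calc |(⟪A z, z⟫_ℂ).re| * (‖z‖⁻¹ * ‖z‖⁻¹)
            = |((((‖z‖⁻¹ : ℝ) : ℂ) * ((‖z‖⁻¹ : ℝ) : ℂ) * ⟪A z, z⟫_ℂ)).re| := by
              rw [show (((‖z‖⁻¹ : ℝ) : ℂ) * ((‖z‖⁻¹ : ℝ) : ℂ) * ⟪A z, z⟫_ℂ)
                  = (((‖z‖⁻¹ * ‖z‖⁻¹ : ℝ)) : ℂ) * ⟪A z, z⟫_ℂ by push_cast; ring,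
                Complex.re_ofReal_mul, abs_mul, abs_of_nonneg (by positivity : (0:ℝ) ≤ ‖z‖⁻¹ * ‖z‖⁻¹)]
              ring
          _ ≤ M := h2
      have hpos : (0:ℝ) < ‖z‖ ^ 2 := by positivity
      calc |(⟪A z, z⟫_ℂ).re| = (|(⟪A z, z⟫_ℂ).re| * (‖z‖⁻¹ * ‖z‖⁻¹)) * ‖z‖ ^ 2 := by
            rw [mul_assoc, show (‖z‖⁻¹ * ‖z‖⁻¹) * ‖z‖ ^ 2 = 1 by rw [pow_two]; field_simp,
              mul_one]
        _ ≤ M * ‖z‖ ^ 2 := by gcongr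
  refine A.opNorm_le_bound hM fun x => ?_
  rcases eq_or_ne (A x) 0 with hAx | hAx
  · rw [hAx, norm_zero]; positivity
  · set y : H := (‖x‖ / ‖A x‖ : ℝ) • A x with hy
    have hAxn : (0:ℝ) < ‖A x‖ := norm_pos_iff.mpr hAx
    have hyn : ‖y‖ = ‖x‖ := by
      rw [hy, norm_smul, Real.norm_eq_abs, abs_div, abs_of_nonneg (norm_nonneg x),
        abs_of_nonneg (norm_nonneg _), div_mul_cancel₀ _ hAxn.ne']
    have hsym : ∀ u v : H, ⟪A u, v⟫_ℂ = ⟪u, A v⟫_ℂ := hA.isSymmetric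
    have key : (⟪A (x + y), x + y⟫_ℂ).re - (⟪A (x - y), x - y⟫_ℂ).re
        = 4 * (‖x‖ * ‖A x‖) := by
      have e1 : ⟪A (x + y), x + y⟫_ℂ
          = ⟪A x, x⟫_ℂ + ⟪A x, y⟫_ℂ + ⟪A y, x⟫_ℂ + ⟪A y, y⟫_ℂ := by
        rw [map_add, inner_add_left, inner_add_right, inner_add_right]; ring
      have e2 : ⟪A (x - y), x - y⟫_ℂ
          = ⟪A x, x⟫_ℂ - ⟪A x, y⟫_ℂ - ⟪A y, x⟫_ℂ + ⟪A y, y⟫_ℂ := by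
        rw [map_sub, inner_sub_left, inner_sub_right, inner_sub_right]; ring
      have e3 : ⟪A y, x⟫_ℂ = (starRingEnd ℂ) ⟪A x, y⟫_ℂ := by
        rw [hsym, ← inner_conj_symm]
      have : (⟪A x, y⟫_ℂ).re = ‖x‖ * ‖A x‖ := by
        rw [hy, ← Complex.coe_smul, inner_smul_right, inner_self_eq_norm_sq_to_K]
        norm_num
        norm_cast
        field_simp
      rw [e1, e2]
      simp only [Complex.add_re, Complex.sub_re, e3, Complex.conj_re]
      rw [this]; ring
    have h1 := hz (x + y)
    have h2 := hz (x - y)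
    have hpar : ‖x + y‖ ^ 2 + ‖x - y‖ ^ 2 = 2 * (‖x‖ ^ 2 + ‖y‖ ^ 2) := by
      have := parallelogram_law_with_norm ℂ x y
      nlinarith [this]
    have hineq : 4 * (‖x‖ * ‖A x‖) ≤ M * (4 * ‖x‖ ^ 2) := by
      calc 4 * (‖x‖ * ‖A x‖)
          = (⟪A (x + y), x + y⟫_ℂ).re - (⟪A (x - y), x - y⟫_ℂ).re := key.symm
        _ ≤ |(⟪A (x + y), x + y⟫_ℂ).re| + |(⟪A (x - y), x - y⟫_ℂ).re| := by
            have := abs_nonneg ((⟪A (x - y), x - y⟫_ℂ).re)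
            have := le_abs_self ((⟪A (x + y), x + y⟫_ℂ).re)
            have := neg_abs_le ((⟪A (x - y), x - y⟫_ℂ).re)
            linarith
        _ ≤ M * ‖x + y‖ ^ 2 + M * ‖x - y‖ ^ 2 := add_le_add h1 h2
        _ = M * (‖x + y‖ ^ 2 + ‖x - y‖ ^ 2) := by ring
        _ = M * (2 * (‖x‖ ^ 2 + ‖y‖ ^ 2)) := by rw [hpar]
        _ = M * (4 * ‖x‖ ^ 2) := by rw [hyn]; ring
    have hxpos : (0:ℝ) < ‖x‖ := by
      rcases eq_or_lt_of_le (norm_nonneg x) with h0 | h0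
      · exfalso; apply hAx; rw [show x = 0 from norm_eq_zero.mp h0.symm, map_zero]
      · exact h0
    nlinarith [hineq, hxpos]


lemma cart_id (T : H →L[ℂ] H) :
    adjoint T * T + T * adjoint T = (2:ℂ) • (reP T ^ 2 + imP T ^ 2) := by
  have h1 : reP T ^ 2 = ((2:ℂ)⁻¹ * (2:ℂ)⁻¹) • ((T + adjoint T) * (T + adjoint T)) := by
    rw [reP, sq, smul_mul_smul_comm]
  have h2 : imP T ^ 2 = (-(4:ℂ)⁻¹) • ((T - adjoint T) * (T - adjoint T)) := by
    rw [imP, sq, smul_mul_smul_comm]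
    congr 1
    have h : (Complex.I : ℂ) ^ 2 = -1 := Complex.I_sq
    field_simp
    linear_combination (4:ℂ) * h
  rw [h1, h2]
  simp only [mul_add, add_mul, mul_sub, sub_mul]
  module

lemma abs_inner_reP_le (T : H →L[ℂ] H) (x : H) :
    ‖⟪reP T x, x⟫_ℂ‖ ≤ ‖⟪T x, x⟫_ℂ‖ := by
  have h : ⟪reP T x, x⟫_ℂ = (2:ℂ)⁻¹ * (⟪T x, x⟫_ℂ + (starRingEnd ℂ) ⟪T x, x⟫_ℂ) := by
    rw [reP]
    simp only [coe_smul', Pi.smul_apply, add_apply, inner_smul_left, inner_add_left,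
      adjoint_inner_left, ← inner_conj_symm x (T x), map_inv₀, Complex.conj_ofNat]
  rw [h, norm_mul]
  calc ‖(2:ℂ)⁻¹‖ * ‖⟪T x, x⟫_ℂ + (starRingEnd ℂ) ⟪T x, x⟫_ℂ‖
      ≤ (1/2) * (‖⟪T x, x⟫_ℂ‖ + ‖(starRingEnd ℂ) ⟪T x, x⟫_ℂ‖) := by
        gcongr
        · norm_num [map_inv₀]
        · exact norm_add_le _ _
    _ = ‖⟪T x, x⟫_ℂ‖ := by rw [Complex.norm_conj]; ring

lemma abs_inner_imP_le (T : H →L[ℂ] H) (x : H) :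
    ‖⟪imP T x, x⟫_ℂ‖ ≤ ‖⟪T x, x⟫_ℂ‖ := by
  have h : ⟪imP T x, x⟫_ℂ
      = (starRingEnd ℂ) (2*Complex.I:ℂ)⁻¹ * (⟪T x, x⟫_ℂ - (starRingEnd ℂ) ⟪T x, x⟫_ℂ) := by
    rw [imP]
    simp only [coe_smul', Pi.smul_apply, sub_apply, inner_smul_left, inner_sub_left,
      adjoint_inner_left, ← inner_conj_symm x (T x)]
  rw [h, norm_mul]
  calc ‖(starRingEnd ℂ) (2*Complex.I:ℂ)⁻¹‖
        * ‖⟪T x, x⟫_ℂ - (starRingEnd ℂ) ⟪T x, x⟫_ℂ‖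
      ≤ (1/2) * (‖⟪T x, x⟫_ℂ‖ + ‖(starRingEnd ℂ) ⟪T x, x⟫_ℂ‖) := by
        gcongr
        · rw [Complex.norm_conj]
          norm_num [map_inv₀, map_mul, Complex.norm_I]
        · simpa [sub_eq_add_neg, map_neg] using
            norm_add_le ⟪T x, x⟫_ℂ (-(starRingEnd ℂ) ⟪T x, x⟫_ℂ)
    _ = ‖⟪T x, x⟫_ℂ‖ := by rw [Complex.norm_conj]; ring

lemma inner_sq {A : H →L[ℂ] H} (hA : IsSelfAdjoint A) (x : H) :
    ⟪(A ^ 2) x, x⟫_ℂ = ((‖A x‖ ^ 2 : ℝ) : ℂ) := by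
  rw [sq, ContinuousLinearMap.mul_apply]
  have h : ⟪A (A x), x⟫_ℂ = ⟪A x, A x⟫_ℂ := hA.isSymmetric (A x) x
  rw [h, inner_self_eq_norm_sq_to_K]
  norm_num

lemma abs_of_real_sub_I_mul (a b : ℝ) :
    ‖(a:ℂ) - Complex.I * b‖ = Real.sqrt (a^2 + b^2) := by
  rw [Complex.norm_def, Complex.normSq_apply]
  norm_num [Complex.sub_re, Complex.sub_im]
  ring_nf

theorem stmt_13 (T : H →L[ℂ] H) :
    (1/4) * ‖adjoint T * T + T * adjoint T‖ ≤
        (Real.sqrt 2 / 2) * numRadius (reP T ^ 2 + Complex.I • imP T ^ 2) ∧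
      (Real.sqrt 2 / 2) * numRadius (reP T ^ 2 + Complex.I • imP T ^ 2) ≤ numRadius T ^ 2 := by
  set A := reP T with hAdef
  set B := imP T with hBdef
  set S := reP T ^ 2 + Complex.I • imP T ^ 2 with hSdef
  have hA : IsSelfAdjoint A := reP_sa T
  have hB : IsSelfAdjoint B := imP_sa T
  have hP : IsSelfAdjoint (A ^ 2 + B ^ 2) := (hA.pow 2).add (hB.pow 2)
  have hSx : ∀ x : H, ⟪S x, x⟫_ℂ
      = ((‖A x‖ ^ 2 : ℝ) : ℂ) - Complex.I * ((‖B x‖ ^ 2 : ℝ) : ℂ) := by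
    intro x
    rw [hSdef]
    simp only [add_apply, coe_smul', Pi.smul_apply, inner_add_left, inner_smul_left,
      Complex.conj_I]
    rw [inner_sq hA, inner_sq hB]
    ring
  have absS : ∀ x : H, ‖⟪S x, x⟫_ℂ‖
      = Real.sqrt ((‖A x‖ ^ 2) ^ 2 + (‖B x‖ ^ 2) ^ 2) := by
    intro x
    rw [hSx x, abs_of_real_sub_I_mul]
  have hnrS : 0 ≤ numRadius S := nr_nonneg S
  have hnrT : 0 ≤ numRadius T := nr_nonneg T
  constructor
  · -- first inequality
    have hid : ‖adjoint T * T + T * adjoint T‖ = 2 * ‖A ^ 2 + B ^ 2‖ := by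
      rw [cart_id T, norm_smul]
      norm_num
      rfl
    rw [hid]
    have hPle : ‖A ^ 2 + B ^ 2‖ ≤ Real.sqrt 2 * numRadius S := by
      refine sa_norm_le hP (by positivity) fun x hx => ?_
      have hre : (⟪(A ^ 2 + B ^ 2) x, x⟫_ℂ).re = ‖A x‖ ^ 2 + ‖B x‖ ^ 2 := by
        simp only [add_apply, inner_add_left]
        rw [inner_sq hA, inner_sq hB]
        norm_num [← Complex.ofReal_pow]
      rw [hre, abs_of_nonneg (by positivity)]
      have h1 : ‖A x‖ ^ 2 + ‖B x‖ ^ 2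
          ≤ Real.sqrt 2 * Real.sqrt ((‖A x‖ ^ 2) ^ 2 + (‖B x‖ ^ 2) ^ 2) := by
        have h2 : ‖A x‖ ^ 2 + ‖B x‖ ^ 2
            = Real.sqrt ((‖A x‖ ^ 2 + ‖B x‖ ^ 2) ^ 2) := by
          rw [Real.sqrt_sq (by positivity)]
        rw [h2, ← Real.sqrt_mul (by norm_num : (0:ℝ) ≤ 2)]
        apply Real.sqrt_le_sqrt
        nlinarith [sq_nonneg (‖A x‖ ^ 2 - ‖B x‖ ^ 2)]
      calc ‖A x‖ ^ 2 + ‖B x‖ ^ 2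
          ≤ Real.sqrt 2 * Real.sqrt ((‖A x‖ ^ 2) ^ 2 + (‖B x‖ ^ 2) ^ 2) := h1
        _ = Real.sqrt 2 * ‖⟪S x, x⟫_ℂ‖ := by rw [absS x]
        _ ≤ Real.sqrt 2 * numRadius S := by gcongr; exact le_nr S hx
    calc (1/4) * (2 * ‖A ^ 2 + B ^ 2‖) = (1/2) * ‖A ^ 2 + B ^ 2‖ := by ring
      _ ≤ (1/2) * (Real.sqrt 2 * numRadius S) := by gcongr
      _ = (Real.sqrt 2 / 2) * numRadius S := by ring
  · -- second inequality
    have hnA : ‖A‖ ≤ numRadius T := by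
      refine sa_norm_le hA hnrT fun x hx => ?_
      calc |(⟪A x, x⟫_ℂ).re| ≤ ‖⟪A x, x⟫_ℂ‖ := Complex.abs_re_le_norm _
        _ ≤ ‖⟪T x, x⟫_ℂ‖ := abs_inner_reP_le T x
        _ ≤ numRadius T := le_nr T hx
    have hnB : ‖B‖ ≤ numRadius T := by
      refine sa_norm_le hB hnrT fun x hx => ?_
      calc |(⟪B x, x⟫_ℂ).re| ≤ ‖⟪B x, x⟫_ℂ‖ := Complex.abs_re_le_norm _
        _ ≤ ‖⟪T x, x⟫_ℂ‖ := abs_inner_imP_le T x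
        _ ≤ numRadius T := le_nr T hx
    have h2 : numRadius S ≤ Real.sqrt 2 * numRadius T ^ 2 := by
      refine nr_le S (by positivity) fun x hx => ?_
      have ha : ‖A x‖ ^ 2 ≤ numRadius T ^ 2 := by
        have : ‖A x‖ ≤ numRadius T := by
          calc ‖A x‖ ≤ ‖A‖ * ‖x‖ := A.le_opNorm x
            _ = ‖A‖ := by rw [hx, mul_one]
            _ ≤ numRadius T := hnA
        exact pow_le_pow_left₀ (norm_nonneg _) this 2
      have hb : ‖B x‖ ^ 2 ≤ numRadius T ^ 2 := by
        have : ‖B x‖ ≤ numRadius T := by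
          calc ‖B x‖ ≤ ‖B‖ * ‖x‖ := B.le_opNorm x
            _ = ‖B‖ := by rw [hx, mul_one]
            _ ≤ numRadius T := hnB
        exact pow_le_pow_left₀ (norm_nonneg _) this 2
      rw [absS x]
      calc Real.sqrt ((‖A x‖ ^ 2) ^ 2 + (‖B x‖ ^ 2) ^ 2)
          ≤ Real.sqrt (2 * (numRadius T ^ 2) ^ 2) := by
            apply Real.sqrt_le_sqrt
            nlinarith [sq_nonneg (‖A x‖), sq_nonneg (‖B x‖)]
        _ = Real.sqrt 2 * numRadius T ^ 2 := by
            rw [Real.sqrt_mul (by norm_num : (0:ℝ) ≤ 2), Real.sqrt_sq (by positivity)]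
    calc (Real.sqrt 2 / 2) * numRadius S
        ≤ (Real.sqrt 2 / 2) * (Real.sqrt 2 * numRadius T ^ 2) := by
          gcongr
      _ = (Real.sqrt 2 * Real.sqrt 2) / 2 * numRadius T ^ 2 := by ring
      _ = numRadius T ^ 2 := by
          rw [Real.mul_self_sqrt (by norm_num : (0:ℝ) ≤ 2)]; ring
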